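/- Every DM-irreducible balanced bipartite graph G = (V+, V-; E) with |V+| = |V-| = n ≥ 1 has a strongly balanced spanning tree, i.e., a spanning tree T such that some vertex r ∈ V+ has degree 1 in T and every other vertex in V+ has degree 2 in T. -/

import Mathlib

open Sum

/-- The simple graph on `α ⊕ β` determined by an edge set `T ⊆ α × β`. -/
def sg {α β : Type*} (T : Set (α × β)) : SimpleGraph (α ⊕ β) :=
  SimpleGraph.fromRel (fun u v => ∃ a b, u = inl a ∧ v = inr b ∧ (a, b) ∈ T)

/-- Degree of `a ∈ V⁺` in the edge set `T`. -/
noncomputable def degP {α β : Type*} (T : Set (α × β)) (a : α) : ℕ :=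
  {b : β | (a, b) ∈ T}.ncard

/-- Arc relation of the auxiliary digraph. -/
def Step {α β : Type*} (E M : Set (α × β)) : (α ⊕ β) → (α ⊕ β) → Prop
  | inl a, inr b => (a, b) ∈ E
  | inr b, inl a => (a, b) ∈ M
  | _, _ => False

def StronglyConnected {V : Type*} (R : V → V → Prop) : Prop :=
  ∀ u v : V, Relation.ReflTransGen R u v

def IsPerfectMatching {α β : Type*} (E M : Set (α × β)) : Prop :=
  M ⊆ E ∧ (∀ a : α, ∃! b : β, (a, b) ∈ M) ∧ (∀ b : β, ∃! a : α, (a, b) ∈ M)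

def DMIrreducible {α β : Type*} (E : Set (α × β)) : Prop :=
  ∃ M, IsPerfectMatching E M ∧ StronglyConnected (Step E M)

private lemma card_le_ncard_edgeSet_add_one {V : Type*} [Fintype V] {G : SimpleGraph V}
    (hconn : G.Connected) : Fintype.card V ≤ G.edgeSet.ncard + 1 := by
  classical
  obtain ⟨root⟩ := hconn.nonempty
  have hchoice : ∀ v : V, v ≠ root →
      ∃ e ∈ G.edgeSet, ∃ x, e = s(v, x) ∧ G.dist x root < G.dist v root := by
    intro v hv
    have hpos : 0 < G.dist v root := hconn.pos_dist_of_ne hv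
    obtain ⟨p, hp⟩ := hconn.exists_walk_length_eq_dist v root
    cases p with
    | nil => simp [SimpleGraph.dist_self] at hpos
    | @cons _ x _ h q =>
      refine ⟨s(v, x), h, x, rfl, ?_⟩
      have hq : G.dist x root ≤ q.length := SimpleGraph.dist_le q
      simp only [SimpleGraph.Walk.length_cons] at hp
      omega
  choose F hF1 hF2 using hchoice
  have hinj : Function.Injective
      (fun v : {v : V // v ≠ root} => (⟨F v.1 v.2, hF1 v.1 v.2⟩ : G.edgeSet)) := by
    rintro ⟨u, hu⟩ ⟨v, hv⟩ h
    simp only [Subtype.mk.injEq] at h ⊢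
    obtain ⟨x, hx, hxd⟩ := hF2 u hu
    obtain ⟨y, hy, hyd⟩ := hF2 v hv
    rw [hx, hy] at h
    rw [Sym2.eq_iff] at h
    rcases h with ⟨h1, _⟩ | ⟨h1, h2⟩
    · exact h1
    · subst h1; subst h2; omega
  have hcard := Fintype.card_le_of_injective _ hinj
  have h1 : Fintype.card {v : V // v ≠ root} = Fintype.card V - 1 := by
    rw [Fintype.card_subtype_compl, Fintype.card_subtype_eq]
  have h2 : G.edgeSet.ncard = Fintype.card {x // x ∈ G.edgeSet} := by
    rw [Set.ncard_eq_toFinset_card', Set.toFinset_card]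
  have h3 : 1 ≤ Fintype.card V := Fintype.card_pos_iff.mpr ⟨root⟩
  omega

private lemma isTree_of_connected_of_ncard {V : Type*} [Fintype V] {G : SimpleGraph V}
    (hconn : G.Connected) (hcard : G.edgeSet.ncard + 1 = Fintype.card V) : G.IsTree := by
  classical
  refine ⟨hconn, ?_⟩
  intro u c hcyc
  have h3 : 3 ≤ c.length := hcyc.three_le_length
  have hne : c.edges ≠ [] := by
    intro h
    have := c.length_edges
    rw [h] at this
    simp at this
    omega
  obtain ⟨e, he⟩ := List.exists_mem_of_ne_nil _ hne
  induction e with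
  | h x y =>
  have hadj : G.Adj x y := c.adj_of_mem_edges he
  have hreach : (G \ SimpleGraph.fromEdgeSet {s(x, y)}).Reachable x y :=
    (SimpleGraph.adj_and_reachable_delete_edges_iff_exists_cycle.mpr ⟨u, c, hcyc, he⟩).2
  set G' := G \ SimpleGraph.fromEdgeSet {s(x, y)} with hG'
  have hstep : ∀ a b : V, G.Adj a b → G'.Reachable a b := by
    intro a b hab
    by_cases h : s(a, b) = s(x, y)
    · rw [Sym2.eq_iff] at h
      rcases h with ⟨rfl, rfl⟩ | ⟨rfl, rfl⟩
      · exact hreach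
      · exact hreach.symm
    · exact SimpleGraph.Adj.reachable (by
        rw [hG', SimpleGraph.sdiff_adj, SimpleGraph.fromEdgeSet_adj]
        exact ⟨hab, fun hf => h hf.1⟩)
  have hconn' : G'.Connected := by
    have : Nonempty V := hconn.nonempty
    refine SimpleGraph.Connected.mk fun a b => ?_
    obtain ⟨p⟩ := hconn.preconnected a b
    induction p with
    | nil => exact SimpleGraph.Reachable.refl _
    | cons h q ih => exact (hstep _ _ h).trans ih
  have hE' : G'.edgeSet = G.edgeSet \ {s(x, y)} := by
    rw [hG', SimpleGraph.edgeSet_sdiff, SimpleGraph.edgeSet_fromEdgeSet]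
    ext e
    simp only [Set.mem_diff, Set.mem_singleton_iff, Set.mem_setOf_eq, not_and, not_not]
    constructor
    · rintro ⟨h1, h2⟩
      refine ⟨h1, fun hh => ?_⟩
      have := h2 hh
      rw [hh] at this
      simp only [Sym2.mem_diagSet, Sym2.isDiag_iff_proj_eq] at this
      exact absurd this hadj.ne
    · rintro ⟨h1, h2⟩
      exact ⟨h1, fun hh => absurd hh h2⟩
  have hmem : s(x, y) ∈ G.edgeSet := hadj
  have hcount : G'.edgeSet.ncard = G.edgeSet.ncard - 1 := by
    rw [hE', Set.ncard_diff_singleton_of_mem hmem]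
  have hpos : 1 ≤ G.edgeSet.ncard := by
    have h4 : G.edgeSet.Nonempty := ⟨_, hmem⟩
    have := Set.ncard_pos (Set.toFinite _) |>.mpr h4
    omega
  have := card_le_ncard_edgeSet_add_one hconn'
  omega

/-- `a` can reach `r` in at most `k` steps of `D`. -/
private def reachIn {α : Type*} (D : α → α → Prop) (r : α) : ℕ → α → Prop
  | 0 => fun a => a = r
  | (k+1) => fun a => reachIn D r k a ∨ ∃ a', reachIn D r k a' ∧ D a a'

theorem stmt10 {α β : Type*} [Fintype α] [Fintype β]
    (hbal : Fintype.card α = Fintype.card β) (hn : 1 ≤ Fintype.card α)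
    (E : Set (α × β)) (hDM : DMIrreducible E) :
    ∃ T : Set (α × β), T ⊆ E ∧ (sg T).IsTree ∧
      ∃ r : α, degP T r = 1 ∧ ∀ a : α, a ≠ r → degP T a = 2 := by
  classical
  obtain ⟨M, ⟨hME, hMl, hMr⟩, hSC⟩ := hDM
  choose m hm hm' using hMl
  choose μ hμ hμ' using hMr
  -- the contracted digraph on α
  set D : α → α → Prop := fun a a' => ∃ b, (a, b) ∈ E ∧ (a', b) ∈ M with hDdef
  have hD : ∀ a a' : α, Relation.ReflTransGen D a a' := by
    have lift : ∀ u v, Relation.ReflTransGen (Step E M) u v →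
        Relation.ReflTransGen D (Sum.elim id μ u) (Sum.elim id μ v) := by
      intro u v h
      induction h with
      | refl => exact Relation.ReflTransGen.refl
      | @tail b c _ hstep ih =>
        cases b with
        | inl a =>
          cases c with
          | inl a' => exact absurd hstep id
          | inr b' => exact ih.tail ⟨b', hstep, hμ b'⟩
        | inr b' =>
          cases c with
          | inl a' =>
            have : a' = μ b' := hμ' b' a' hstep
            simpa [this] using ih
          | inr b'' => exact absurd hstep id
    intro a a'
    exact lift (inl a) (inl a') (hSC _ _)
  have hα : Nonempty α := Fintype.card_pos_iff.mp hn
  obtain ⟨r⟩ := hα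
  -- depth
  have hreach : ∀ a : α, ∃ k, reachIn D r k a := by
    intro a
    have h := hD a r
    induction h using Relation.ReflTransGen.head_induction_on with
    | refl => exact ⟨0, rfl⟩
    | head hstep _ ih =>
      obtain ⟨k, hk⟩ := ih
      exact ⟨k + 1, Or.inr ⟨_, hk, hstep⟩⟩
  set depth : α → ℕ := fun a => Nat.find (hreach a) with hdepthdef
  have hdepth_step : ∀ a, a ≠ r →
      ∃ a' b, depth a' < depth a ∧ (a, b) ∈ E ∧ (a', b) ∈ M := by
    intro a ha
    have h1 : reachIn D r (depth a) a := Nat.find_spec (hreach a)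
    have h0 : depth a ≠ 0 := by
      intro h
      rw [h] at h1
      exact ha h1
    obtain ⟨k, hk⟩ : ∃ k, depth a = k + 1 := ⟨depth a - 1, by omega⟩
    rw [hk] at h1
    have h2 : ¬ reachIn D r k a := by
      intro h
      have : depth a ≤ k := Nat.find_min' (hreach a) h
      omega
    rcases h1 with h1 | ⟨a', ha', hDa⟩
    · exact absurd h1 h2
    · obtain ⟨b, hbE, hbM⟩ := hDa
      refine ⟨a', b, ?_, hbE, hbM⟩
      have : depth a' ≤ k := Nat.find_min' (hreach a') ha'
      omega
  -- choose the extra edge for each non-root vertex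
  have hfex : ∀ a : α, ∃ b : β, (a, b) ∈ E ∧
      (a ≠ r → ∃ a', (a', b) ∈ M ∧ depth a' < depth a) := by
    intro a
    by_cases ha : a = r
    · exact ⟨m a, hME (hm a), fun h => absurd ha h⟩
    · obtain ⟨a', b, hlt, hbE, hbM⟩ := hdepth_step a ha
      exact ⟨b, hbE, fun _ => ⟨a', hbM, hlt⟩⟩
  choose f hfE hfP using hfex
  have hfm : ∀ a, a ≠ r → f a ≠ m a := by
    intro a ha hcontra
    obtain ⟨a', hM, hlt⟩ := hfP a ha
    rw [hcontra] at hM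
    have h1 : a' = μ (m a) := hμ' (m a) a' hM
    have h2 : a = μ (m a) := hμ' (m a) a (hm a)
    rw [h1, ← h2] at hlt
    omega
  -- the tree edge set
  set T : Set (α × β) := M ∪ {p : α × β | p.1 ≠ r ∧ p.2 = f p.1} with hTdef
  have hTE : T ⊆ E := by
    rintro ⟨a, b⟩ (h | ⟨h1, h2⟩)
    · exact hME h
    · simp only at h2
      rw [h2]
      exact hfE a
  have hTmem : ∀ a b, (a, b) ∈ T ↔ b = m a ∨ (a ≠ r ∧ b = f a) := by
    intro a b
    constructor
    · rintro (h | ⟨h1, h2⟩)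
      · exact Or.inl (hm' a b h)
      · exact Or.inr ⟨h1, h2⟩
    · rintro (h | ⟨h1, h2⟩)
      · rw [h]; exact Or.inl (hm a)
      · exact Or.inr ⟨h1, h2⟩
  -- degrees
  have hdr : degP T r = 1 := by
    have : {b : β | (r, b) ∈ T} = {m r} := by
      ext b
      simp only [Set.mem_setOf_eq, Set.mem_singleton_iff, hTmem, ne_eq, not_true_eq_false,
        false_and, or_false]
    rw [degP, this, Set.ncard_singleton]
  have hda : ∀ a : α, a ≠ r → degP T a = 2 := by
    intro a ha
    have : {b : β | (a, b) ∈ T} = {m a, f a} := by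
      ext b
      simp only [Set.mem_setOf_eq, Set.mem_insert_iff, Set.mem_singleton_iff, hTmem, ha,
        ne_eq, not_false_eq_true, true_and]
    rw [degP, this, Set.ncard_pair (Ne.symm (hfm a ha))]
  -- adjacency
  have adjT : ∀ a b, (a, b) ∈ T → (sg T).Adj (inl a) (inr b) := by
    intro a b h
    rw [sg, SimpleGraph.fromRel_adj]
    exact ⟨by simp, Or.inl ⟨a, b, rfl, rfl, h⟩⟩
  -- connectivity
  have hreachroot : ∀ a : α, (sg T).Reachable (inl a) (inl r) := by
    have key : ∀ n (a : α), depth a = n → (sg T).Reachable (inl a) (inl r) := by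
      intro n
      induction n using Nat.strong_induction_on with
      | _ n ih =>
        intro a hn'
        by_cases ha : a = r
        · rw [ha]
        · obtain ⟨a', hM, hlt⟩ := hfP a ha
          have h1 : (sg T).Adj (inl a) (inr (f a)) :=
            adjT a (f a) (Or.inr ⟨ha, rfl⟩)
          have h2 : (sg T).Adj (inl a') (inr (f a)) := adjT a' (f a) (Or.inl hM)
          have h3 := ih (depth a') (hn' ▸ hlt) a' rfl
          exact (h1.reachable.trans h2.symm.reachable).trans h3
    exact fun a => key (depth a) a rfl
  have hconn : (sg T).Connected := by
    have hne : Nonempty (α ⊕ β) := ⟨inl r⟩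
    refine SimpleGraph.Connected.mk fun u v => ?_
    have hu : ∀ w : α ⊕ β, (sg T).Reachable w (inl r) := by
      intro w
      cases w with
      | inl a => exact hreachroot a
      | inr b =>
        exact ((adjT (μ b) b (Or.inl (hμ b))).symm.reachable).trans (hreachroot (μ b))
    exact (hu u).trans (hu v).symm
  -- edge counting
  have hinj2 : Function.Injective (fun p : α × β => (s(inl p.1, inr p.2) : Sym2 (α ⊕ β))) := by
    rintro ⟨a, b⟩ ⟨a', b'⟩ h
    simp only [Sym2.eq_iff] at h
    rcases h with ⟨h1, h2⟩ | ⟨h1, _⟩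
    · exact Prod.ext (inl_injective h1) (inr_injective h2)
    · exact absurd h1 (by simp)
  have hES : (sg T).edgeSet = (fun p : α × β => s(inl p.1, inr p.2)) '' T := by
    ext e
    induction e with
    | h u v =>
      rw [SimpleGraph.mem_edgeSet]
      constructor
      · intro h
        rw [sg, SimpleGraph.fromRel_adj] at h
        obtain ⟨hne, ⟨a, b, rfl, rfl, hT⟩ | ⟨a, b, rfl, rfl, hT⟩⟩ := h
        · exact ⟨(a, b), hT, rfl⟩
        · exact ⟨(a, b), hT, Sym2.eq_swap⟩
      · rintro ⟨⟨a, b⟩, hT, heq⟩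
        rw [← SimpleGraph.mem_edgeSet, ← heq]
        exact adjT a b hT
  have hMeq : M = (fun a : α => (a, m a)) '' Set.univ := by
    ext ⟨a, b⟩
    simp only [Set.image_univ, Set.mem_range]
    constructor
    · intro h
      exact ⟨a, by rw [hm' a b h]⟩
    · rintro ⟨x, hx⟩
      obtain ⟨h1, h2⟩ := Prod.ext_iff.mp hx
      simp only at h1 h2
      rw [← h1, ← h2]
      exact hm x
  have hMcard : M.ncard = Fintype.card α := by
    rw [hMeq, Set.ncard_image_of_injective _ (fun x y hxy => (Prod.ext_iff.mp hxy).1),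
      Set.ncard_univ, Nat.card_eq_fintype_card]
  have hFeq : {p : α × β | p.1 ≠ r ∧ p.2 = f p.1} = (fun a : α => (a, f a)) '' {a | a ≠ r} := by
    ext ⟨a, b⟩
    constructor
    · rintro ⟨h1, h2⟩
      exact ⟨a, h1, by simp only at h2; rw [h2]⟩
    · rintro ⟨x, hx, hxe⟩
      obtain ⟨h1, h2⟩ := Prod.ext_iff.mp hxe
      simp only at h1 h2
      rw [← h1, ← h2] at *
      exact ⟨hx, rfl⟩
  have hFcard : ({p : α × β | p.1 ≠ r ∧ p.2 = f p.1}).ncard = Fintype.card α - 1 := by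
    rw [hFeq, Set.ncard_image_of_injective _ (fun x y hxy => (Prod.ext_iff.mp hxy).1)]
    have huniv : {a : α | a ≠ r} = Set.univ \ {r} := by ext; simp
    rw [huniv, Set.ncard_diff_singleton_of_mem (Set.mem_univ r),
      Set.ncard_univ, Nat.card_eq_fintype_card]
  have hdisj : Disjoint M {p : α × β | p.1 ≠ r ∧ p.2 = f p.1} := by
    rw [Set.disjoint_left]
    rintro ⟨a, b⟩ hM ⟨h1, h2⟩
    simp only at h1 h2
    have hfma : f a = m a := by rw [← h2]; exact hm' a b hM
    exact hfm a h1 hfma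
  have hTcard : T.ncard = Fintype.card α + (Fintype.card α - 1) := by
    rw [hTdef, Set.ncard_union_eq hdisj (Set.toFinite _) (Set.toFinite _), hMcard, hFcard]
  have hEScard : (sg T).edgeSet.ncard = T.ncard := by
    rw [hES, Set.ncard_image_of_injective _ hinj2]
  refine ⟨T, hTE, ?_, r, hdr, hda⟩
  apply isTree_of_connected_of_ncard hconn
  rw [hEScard, hTcard, Fintype.card_sum, ← hbal]
  omega
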